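/- Let T be a tournament on n ≥ 4 vertices. Let C3(T) denote the number of 3-element vertex subsets spanning a cyclic triangle and T4(T) the number of 4-element vertex subsets spanning a transitive subtournament. Then 2·T4(T) ≤ 2·C(n,4) − (n−3)·C3(T). In particular, in density form, t4(T) ≤ 2·t3(T) − 1, where t3(T) = 1 − C3(T)/C(n,3) is the density of transitive triples and t4(T) = T4(T)/C(n,4). -/
import Mathlib


open Finset

/-- A tournament on `Fin n`: an orientation of the complete graph, i.e. no loops and
for all distinct `x, y` exactly one of `r x y`, `r y x` holds. -/
def IsTournament {n : ℕ} (r : Fin n → Fin n → Prop) : Prop :=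
  (∀ x, ¬ r x x) ∧ ∀ x y : Fin n, x ≠ y → ((r x y ∧ ¬ r y x) ∨ (r y x ∧ ¬ r x y))

/-- `s` spans a cyclic triangle: `s = {x,y,z}` with `x→y→z→x`. -/
def IsCyclicTriple {n : ℕ} (r : Fin n → Fin n → Prop) (s : Finset (Fin n)) : Prop :=
  ∃ x y z : Fin n, x ≠ y ∧ y ≠ z ∧ x ≠ z ∧ s = {x, y, z} ∧ r x y ∧ r y z ∧ r z x

/-- `s` spans a transitive triple. -/
def IsTransTriple {n : ℕ} (r : Fin n → Fin n → Prop) (s : Finset (Fin n)) : Prop :=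
  ∃ x y z : Fin n, x ≠ y ∧ y ≠ z ∧ x ≠ z ∧ s = {x, y, z} ∧ r x y ∧ r y z ∧ r x z

/-- `s` contains a directed 4-cycle through all of its (four) elements. -/
def HasCycle4 {n : ℕ} (r : Fin n → Fin n → Prop) (s : Finset (Fin n)) : Prop :=
  ∃ a b c d : Fin n, a ≠ b ∧ a ≠ c ∧ a ≠ d ∧ b ≠ c ∧ b ≠ d ∧ c ≠ d ∧
    s = {a, b, c, d} ∧ r a b ∧ r b c ∧ r c d ∧ r d a

/-- `s` spans a transitive 4-vertex subtournament. -/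
def IsTrans4 {n : ℕ} (r : Fin n → Fin n → Prop) (s : Finset (Fin n)) : Prop :=
  ∃ a b c d : Fin n, a ≠ b ∧ a ≠ c ∧ a ≠ d ∧ b ≠ c ∧ b ≠ d ∧ c ≠ d ∧
    s = {a, b, c, d} ∧ r a b ∧ r a c ∧ r a d ∧ r b c ∧ r b d ∧ r c d

open Classical in
/-- `C3(T)`: number of 3-element vertex subsets spanning a cyclic triangle. -/
noncomputable def cyc3Count {n : ℕ} (r : Fin n → Fin n → Prop) : ℕ :=
  ((univ.powersetCard 3).filter (fun s => IsCyclicTriple r s)).card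

open Classical in
/-- `T3(T)`: number of 3-element vertex subsets spanning a transitive triple. -/
noncomputable def trans3Count {n : ℕ} (r : Fin n → Fin n → Prop) : ℕ :=
  ((univ.powersetCard 3).filter (fun s => IsTransTriple r s)).card

open Classical in
/-- `C4(T)`: number of 4-element vertex subsets containing a directed 4-cycle. -/
noncomputable def cyc4Count {n : ℕ} (r : Fin n → Fin n → Prop) : ℕ :=
  ((univ.powersetCard 4).filter (fun s => HasCycle4 r s)).card

open Classical in
/-- `T4(T)`: number of 4-element vertex subsets spanning a transitive subtournament. -/
noncomputable def trans4Count {n : ℕ} (r : Fin n → Fin n → Prop) : ℕ :=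
  ((univ.powersetCard 4).filter (fun s => IsTrans4 r s)).card

section
variable {n : ℕ} {r : Fin n → Fin n → Prop}

lemma tourn_asymm (hT : IsTournament r) {x y : Fin n} (h : r x y) : ¬ r y x := by
  rcases eq_or_ne x y with rfl | hxy
  · exact absurd h (hT.1 x)
  · rcases hT.2 x y hxy with ⟨h1, h2⟩ | ⟨h1, h2⟩
    · exact h2
    · exact absurd h h2

lemma tourn_ne (hT : IsTournament r) {x y : Fin n} (h : r x y) : x ≠ y := by
  rintro rfl; exact hT.1 x h

/-- a triple with a source is not cyclic -/
lemma source_not_cyc (hT : IsTournament r) {t : Finset (Fin n)} {v : Fin n}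
    (hv : v ∈ t) (hsrc : ∀ w ∈ t, w ≠ v → r v w) : ¬ IsCyclicTriple r t := by
  rintro ⟨x, y, z, hxy, hyz, hxz, rfl, hrxy, hryz, hrzx⟩
  simp only [mem_insert, mem_singleton] at hv
  rcases hv with rfl | rfl | rfl
  · exact tourn_asymm hT hrzx (hsrc z (by simp) (Ne.symm hxz))
  · exact tourn_asymm hT hrxy (hsrc x (by simp) hxy)
  · exact tourn_asymm hT hryz (hsrc y (by simp) hyz)

open Classical in
lemma src_mem (hT : IsTournament r) {s : Finset (Fin n)} {v x y : Fin n}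
    (hv : v ∈ s) (hx : x ∈ s) (hy : y ∈ s)
    (hvx : r v x) (hvy : r v y) (hxy : x ≠ y) :
    ({v, x, y} : Finset (Fin n)) ∈
      (powersetCard 3 s).filter (fun t => ¬ IsCyclicTriple r t) := by
  classical
  have hvx' := tourn_ne hT hvx
  have hvy' := tourn_ne hT hvy
  refine mem_filter.2 ⟨mem_powersetCard.2 ⟨?_, ?_⟩, ?_⟩
  · intro w hw; simp only [mem_insert, mem_singleton] at hw
    rcases hw with rfl | rfl | rfl <;> assumption
  · rw [card_insert_of_notMem (by simp [hvx', hvy']),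
      card_insert_of_notMem (by simp [hxy]), card_singleton]
  · refine source_not_cyc hT (v := v) (mem_insert_self _ _) ?_
    intro w hw hwv
    simp only [mem_insert, mem_singleton] at hw
    rcases hw with rfl | rfl | rfl
    · exact absurd rfl hwv
    · exact hvx
    · exact hvy
end

section
variable {n : ℕ} {r : Fin n → Fin n → Prop}

open Classical in
/-- two distinct source triples with different sources -/
lemma two_src (hT : IsTournament r) {s : Finset (Fin n)} {v x y v' x' y' : Fin n}
    (hv : v ∈ s) (hx : x ∈ s) (hy : y ∈ s) (hv' : v' ∈ s) (hx' : x' ∈ s) (hy' : y' ∈ s)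
    (hvv' : v ≠ v') (hvx : r v x) (hvy : r v y) (hxy : x ≠ y)
    (hvx' : r v' x') (hvy' : r v' y') (hxy' : x' ≠ y') :
    2 ≤ ((powersetCard 3 s).filter (fun t => ¬ IsCyclicTriple r t)).card := by
  rw [show (2:ℕ) = 1 + 1 by rfl, ← Nat.lt_iff_add_one_le, Finset.one_lt_card]
  refine ⟨_, src_mem hT hv hx hy hvx hvy hxy, _, src_mem hT hv' hx' hy' hvx' hvy' hxy', ?_⟩
  intro h
  have h1 : v ∈ ({v', x', y'} : Finset (Fin n)) := h ▸ mem_insert_self _ _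
  have h2 : v' ∈ ({v, x, y} : Finset (Fin n)) := h ▸ mem_insert_self _ _
  simp only [mem_insert, mem_singleton] at h1 h2
  have hrvv' : r v v' := by
    rcases h2 with rfl | rfl | rfl
    · exact absurd rfl hvv'
    · exact hvx
    · exact hvy
  have hrv'v : r v' v := by
    rcases h1 with rfl | rfl | rfl
    · exact absurd rfl hvv'
    · exact hvx'
    · exact hvy'
  exact tourn_asymm hT hrvv' hrv'v

open Classical in
/-- two distinct source triples with a common source of out-degree 3 -/
lemma two_src3 (hT : IsTournament r) {s : Finset (Fin n)} {v x y z : Fin n}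
    (hv : v ∈ s) (hx : x ∈ s) (hy : y ∈ s) (hz : z ∈ s)
    (hvx : r v x) (hvy : r v y) (hvz : r v z)
    (hxy : x ≠ y) (hxz : x ≠ z) (hyz : y ≠ z) :
    2 ≤ ((powersetCard 3 s).filter (fun t => ¬ IsCyclicTriple r t)).card := by
  rw [show (2:ℕ) = 1 + 1 by rfl, ← Nat.lt_iff_add_one_le, Finset.one_lt_card]
  refine ⟨_, src_mem hT hv hx hy hvx hvy hxy, _, src_mem hT hv hx hz hvx hvz hxz, ?_⟩
  intro h
  have h1 : y ∈ ({v, x, z} : Finset (Fin n)) := h ▸ (by simp : y ∈ ({v, x, y} : Finset (Fin n)))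
  simp only [mem_insert, mem_singleton] at h1
  rcases h1 with rfl | rfl | rfl
  · exact hT.1 y hvy
  · exact hxy rfl
  · exact hyz rfl
end

section
variable {n : ℕ} {r : Fin n → Fin n → Prop}

open Classical in
lemma two_nonc (hT : IsTournament r) {a b c d : Fin n}
    (hab : a ≠ b) (hac : a ≠ c) (had : a ≠ d) (hbc : b ≠ c) (hbd : b ≠ d) (hcd : c ≠ d) :
    2 ≤ ((powersetCard 3 ({a, b, c, d} : Finset (Fin n))).filter
      (fun t => ¬ IsCyclicTriple r t)).card := by
  have ma : a ∈ ({a,b,c,d} : Finset (Fin n)) := by simp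
  have mb : b ∈ ({a,b,c,d} : Finset (Fin n)) := by simp
  have mc : c ∈ ({a,b,c,d} : Finset (Fin n)) := by simp
  have md : d ∈ ({a,b,c,d} : Finset (Fin n)) := by simp
  have nba := hab.symm; have nca := hac.symm; have nda := had.symm
  have ncb := hbc.symm; have ndb := hbd.symm; have ndc := hcd.symm
  rcases hT.2 a b hab with ⟨e0, _⟩ | ⟨e0, _⟩ <;>
  rcases hT.2 a c hac with ⟨e1, _⟩ | ⟨e1, _⟩ <;>
  rcases hT.2 a d had with ⟨e2, _⟩ | ⟨e2, _⟩ <;>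
  rcases hT.2 b c hbc with ⟨e3, _⟩ | ⟨e3, _⟩ <;>
  rcases hT.2 b d hbd with ⟨e4, _⟩ | ⟨e4, _⟩ <;>
  rcases hT.2 c d hcd with ⟨e5, _⟩ | ⟨e5, _⟩ <;>
  first
  | exact two_src3 hT ma mb mc md ‹r a b› ‹r a c› ‹r a d› hbc hbd hcd
  | exact two_src3 hT mb ma mc md ‹r b a› ‹r b c› ‹r b d› hac had hcd
  | exact two_src3 hT mc ma mb md ‹r c a› ‹r c b› ‹r c d› hab had hbd
  | exact two_src3 hT md ma mb mc ‹r d a› ‹r d b› ‹r d c› hab hac hbc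
  | exact two_src hT ma mb mc mb ma mc hab ‹r a b› ‹r a c› hbc ‹r b a› ‹r b c› hac
  | exact two_src hT ma mb mc mb ma md hab ‹r a b› ‹r a c› hbc ‹r b a› ‹r b d› had
  | exact two_src hT ma mb mc mb mc md hab ‹r a b› ‹r a c› hbc ‹r b c› ‹r b d› hcd
  | exact two_src hT ma mb md mb ma mc hab ‹r a b› ‹r a d› hbd ‹r b a› ‹r b c› hac
  | exact two_src hT ma mb md mb ma md hab ‹r a b› ‹r a d› hbd ‹r b a› ‹r b d› had
  | exact two_src hT ma mb md mb mc md hab ‹r a b› ‹r a d› hbd ‹r b c› ‹r b d› hcd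
  | exact two_src hT ma mc md mb ma mc hab ‹r a c› ‹r a d› hcd ‹r b a› ‹r b c› hac
  | exact two_src hT ma mc md mb ma md hab ‹r a c› ‹r a d› hcd ‹r b a› ‹r b d› had
  | exact two_src hT ma mc md mb mc md hab ‹r a c› ‹r a d› hcd ‹r b c› ‹r b d› hcd
  | exact two_src hT ma mb mc mc ma mb hac ‹r a b› ‹r a c› hbc ‹r c a› ‹r c b› hab
  | exact two_src hT ma mb mc mc ma md hac ‹r a b› ‹r a c› hbc ‹r c a› ‹r c d› had
  | exact two_src hT ma mb mc mc mb md hac ‹r a b› ‹r a c› hbc ‹r c b› ‹r c d› hbd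
  | exact two_src hT ma mb md mc ma mb hac ‹r a b› ‹r a d› hbd ‹r c a› ‹r c b› hab
  | exact two_src hT ma mb md mc ma md hac ‹r a b› ‹r a d› hbd ‹r c a› ‹r c d› had
  | exact two_src hT ma mb md mc mb md hac ‹r a b› ‹r a d› hbd ‹r c b› ‹r c d› hbd
  | exact two_src hT ma mc md mc ma mb hac ‹r a c› ‹r a d› hcd ‹r c a› ‹r c b› hab
  | exact two_src hT ma mc md mc ma md hac ‹r a c› ‹r a d› hcd ‹r c a› ‹r c d› had
  | exact two_src hT ma mc md mc mb md hac ‹r a c› ‹r a d› hcd ‹r c b› ‹r c d› hbd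
  | exact two_src hT ma mb mc md ma mb had ‹r a b› ‹r a c› hbc ‹r d a› ‹r d b› hab
  | exact two_src hT ma mb mc md ma mc had ‹r a b› ‹r a c› hbc ‹r d a› ‹r d c› hac
  | exact two_src hT ma mb mc md mb mc had ‹r a b› ‹r a c› hbc ‹r d b› ‹r d c› hbc
  | exact two_src hT ma mb md md ma mb had ‹r a b› ‹r a d› hbd ‹r d a› ‹r d b› hab
  | exact two_src hT ma mb md md ma mc had ‹r a b› ‹r a d› hbd ‹r d a› ‹r d c› hac
  | exact two_src hT ma mb md md mb mc had ‹r a b› ‹r a d› hbd ‹r d b› ‹r d c› hbc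
  | exact two_src hT ma mc md md ma mb had ‹r a c› ‹r a d› hcd ‹r d a› ‹r d b› hab
  | exact two_src hT ma mc md md ma mc had ‹r a c› ‹r a d› hcd ‹r d a› ‹r d c› hac
  | exact two_src hT ma mc md md mb mc had ‹r a c› ‹r a d› hcd ‹r d b› ‹r d c› hbc
  | exact two_src hT mb ma mc mc ma mb hbc ‹r b a› ‹r b c› hac ‹r c a› ‹r c b› hab
  | exact two_src hT mb ma mc mc ma md hbc ‹r b a› ‹r b c› hac ‹r c a› ‹r c d› had
  | exact two_src hT mb ma mc mc mb md hbc ‹r b a› ‹r b c› hac ‹r c b› ‹r c d› hbd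
  | exact two_src hT mb ma md mc ma mb hbc ‹r b a› ‹r b d› had ‹r c a› ‹r c b› hab
  | exact two_src hT mb ma md mc ma md hbc ‹r b a› ‹r b d› had ‹r c a› ‹r c d› had
  | exact two_src hT mb ma md mc mb md hbc ‹r b a› ‹r b d› had ‹r c b› ‹r c d› hbd
  | exact two_src hT mb mc md mc ma mb hbc ‹r b c› ‹r b d› hcd ‹r c a› ‹r c b› hab
  | exact two_src hT mb mc md mc ma md hbc ‹r b c› ‹r b d› hcd ‹r c a› ‹r c d› had
  | exact two_src hT mb mc md mc mb md hbc ‹r b c› ‹r b d› hcd ‹r c b› ‹r c d› hbd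
  | exact two_src hT mb ma mc md ma mb hbd ‹r b a› ‹r b c› hac ‹r d a› ‹r d b› hab
  | exact two_src hT mb ma mc md ma mc hbd ‹r b a› ‹r b c› hac ‹r d a› ‹r d c› hac
  | exact two_src hT mb ma mc md mb mc hbd ‹r b a› ‹r b c› hac ‹r d b› ‹r d c› hbc
  | exact two_src hT mb ma md md ma mb hbd ‹r b a› ‹r b d› had ‹r d a› ‹r d b› hab
  | exact two_src hT mb ma md md ma mc hbd ‹r b a› ‹r b d› had ‹r d a› ‹r d c› hac
  | exact two_src hT mb ma md md mb mc hbd ‹r b a› ‹r b d› had ‹r d b› ‹r d c› hbc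
  | exact two_src hT mb mc md md ma mb hbd ‹r b c› ‹r b d› hcd ‹r d a› ‹r d b› hab
  | exact two_src hT mb mc md md ma mc hbd ‹r b c› ‹r b d› hcd ‹r d a› ‹r d c› hac
  | exact two_src hT mb mc md md mb mc hbd ‹r b c› ‹r b d› hcd ‹r d b› ‹r d c› hbc
  | exact two_src hT mc ma mb md ma mb hcd ‹r c a› ‹r c b› hab ‹r d a› ‹r d b› hab
  | exact two_src hT mc ma mb md ma mc hcd ‹r c a› ‹r c b› hab ‹r d a› ‹r d c› hac
  | exact two_src hT mc ma mb md mb mc hcd ‹r c a› ‹r c b› hab ‹r d b› ‹r d c› hbc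
  | exact two_src hT mc ma md md ma mb hcd ‹r c a› ‹r c d› had ‹r d a› ‹r d b› hab
  | exact two_src hT mc ma md md ma mc hcd ‹r c a› ‹r c d› had ‹r d a› ‹r d c› hac
  | exact two_src hT mc ma md md mb mc hcd ‹r c a› ‹r c d› had ‹r d b› ‹r d c› hbc
  | exact two_src hT mc mb md md ma mb hcd ‹r c b› ‹r c d› hbd ‹r d a› ‹r d b› hab
  | exact two_src hT mc mb md md ma mc hcd ‹r c b› ‹r c d› hbd ‹r d a› ‹r d c› hac
  | exact two_src hT mc mb md md mb mc hcd ‹r c b› ‹r c d› hbd ‹r d b› ‹r d c› hbc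
end

section
variable {n : ℕ} {r : Fin n → Fin n → Prop}

lemma card_eq_four' {α : Type*} [DecidableEq α] {s : Finset α} (h : s.card = 4) :
    ∃ a b c d : α, a ≠ b ∧ a ≠ c ∧ a ≠ d ∧ b ≠ c ∧ b ≠ d ∧ c ≠ d ∧ s = {a, b, c, d} := by
  obtain ⟨a, t, hat, rfl, ht⟩ := Finset.card_eq_succ.1 h
  obtain ⟨b, c, d, hbc, hbd, hcd, rfl⟩ := Finset.card_eq_three.1 ht
  simp only [mem_insert, mem_singleton] at hat
  push_neg at hat
  exact ⟨a, b, c, d, hat.1, hat.2.1, hat.2.2, hbc, hbd, hcd, rfl⟩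

open Classical in
lemma count_le_two (hT : IsTournament r) {s : Finset (Fin n)} (hs : s.card = 4) :
    ((powersetCard 3 s).filter (fun t => IsCyclicTriple r t)).card ≤ 2 := by
  obtain ⟨a, b, c, d, hab, hac, had, hbc, hbd, hcd, rfl⟩ := card_eq_four' hs
  have h2 := two_nonc hT hab hac had hbc hbd hcd
  have hpart := card_filter_add_card_filter_not
    (s := powersetCard 3 ({a,b,c,d} : Finset (Fin n))) (fun t => IsCyclicTriple r t)
  have hcard : (powersetCard 3 ({a,b,c,d} : Finset (Fin n))).card = 4 := by
    rw [card_powersetCard, hs]; decide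
  omega

open Classical in
lemma count_trans (hT : IsTournament r) {s : Finset (Fin n)} (h4 : IsTrans4 r s) :
    ((powersetCard 3 s).filter (fun t => IsCyclicTriple r t)).card = 0 := by
  classical
  obtain ⟨a, b, c, d, hab, hac, had, hbc, hbd, hcd, rfl, rab, rac, rad, rbc, rbd, rcd⟩ := h4
  rw [card_eq_zero, filter_eq_empty_iff]
  intro t ht hcyc
  obtain ⟨x, y, z, hxy, hyz, hxz, rfl, rxy, ryz, rzx⟩ := hcyc
  have hsub := (mem_powersetCard.1 ht).1
  have nba := hab.symm; have nca := hac.symm; have nda := had.symm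
  have ncb := hbc.symm; have ndb := hbd.symm; have ndc := hcd.symm
  have nrba := tourn_asymm hT rab; have nrca := tourn_asymm hT rac
  have nrda := tourn_asymm hT rad; have nrcb := tourn_asymm hT rbc
  have nrdb := tourn_asymm hT rbd; have nrdc := tourn_asymm hT rcd
  have hirr := hT.1
  set rk : Fin n → ℕ := fun w => if w = a then 0 else if w = b then 1 else if w = c then 2 else 3
    with hrk
  have key : ∀ u v : Fin n, u ∈ ({a,b,c,d} : Finset (Fin n)) →
      v ∈ ({a,b,c,d} : Finset (Fin n)) → r u v → rk u < rk v := by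
    intro u v hu hv huv
    simp only [mem_insert, mem_singleton] at hu hv
    rcases hu with rfl | rfl | rfl | rfl <;> rcases hv with rfl | rfl | rfl | rfl <;>
      first
      | exact absurd huv (hirr _)
      | simp_all [rk]
  have hx' : x ∈ ({a,b,c,d} : Finset (Fin n)) := hsub (by simp)
  have hy' : y ∈ ({a,b,c,d} : Finset (Fin n)) := hsub (by simp)
  have hz' : z ∈ ({a,b,c,d} : Finset (Fin n)) := hsub (by simp)
  have k1 := key x y hx' hy' rxy
  have k2 := key y z hy' hz' ryz
  have k3 := key z x hz' hx' rzx
  omega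
end

section
variable {n : ℕ} {r : Fin n → Fin n → Prop}

open Classical in
lemma supersets_card {t : Finset (Fin n)} (ht : t.card = 3) :
    ((powersetCard 4 (univ : Finset (Fin n))).filter (fun s => t ⊆ s)).card = n - 3 := by
  classical
  have himg : (powersetCard 4 (univ : Finset (Fin n))).filter (fun s => t ⊆ s)
      = tᶜ.image (fun v => insert v t) := by
    ext s
    simp only [mem_filter, mem_powersetCard, mem_image, mem_compl]
    constructor
    · rintro ⟨⟨-, hcard⟩, hts⟩
      have hsd : (s \ t).card = 1 := by rw [card_sdiff_of_subset hts, hcard, ht]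
      obtain ⟨v, hv⟩ := card_eq_one.1 hsd
      have hvmem : v ∈ s \ t := hv ▸ mem_singleton_self v
      refine ⟨v, (mem_sdiff.1 hvmem).2, ?_⟩
      have h2 := sdiff_union_of_subset hts
      rw [hv, ← insert_eq] at h2
      exact h2
    · rintro ⟨v, hvt, rfl⟩
      exact ⟨⟨subset_univ _, by rw [card_insert_of_notMem hvt, ht]⟩, subset_insert _ _⟩
  have hinj : Set.InjOn (fun v => insert v t) ↑tᶜ := by
    intro u hu w hw h
    have heq : insert u t = insert w t := h
    have h3 : u ∈ insert w t := heq ▸ mem_insert_self u t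
    rcases mem_insert.1 h3 with h' | h'
    · exact h'
    · exact absurd h' (mem_compl.1 hu)
  rw [himg, card_image_of_injOn hinj, card_compl, ht, Fintype.card_fin]
end


/-- `2·T4(T) ≤ 2·C(n,4) − (n−3)·C3(T)` (stated additively over ℕ),
and in density form `t4(T) ≤ 2·t3(T) − 1` where `t3(T) = 1 − c3(T)`. -/
theorem stmt_2 {n : ℕ} (hn : 4 ≤ n) (r : Fin n → Fin n → Prop) (hT : IsTournament r) :
    2 * trans4Count r + (n - 3) * cyc3Count r ≤ 2 * n.choose 4 ∧
    (trans4Count r : ℝ) / (n.choose 4 : ℝ) ≤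
      2 * (1 - (cyc3Count r : ℝ) / (n.choose 3 : ℝ)) - 1 := by
  classical
  have hn3 : 3 ≤ n := by omega
  set P4 := powersetCard 4 (univ : Finset (Fin n)) with hP4def
  set P3c := (powersetCard 3 (univ : Finset (Fin n))).filter (fun t => IsCyclicTriple r t)
    with hP3cdef
  have hstep1 : ∀ s ∈ P4, (powersetCard 3 s).filter (fun t => IsCyclicTriple r t)
      = P3c.filter (fun t => t ⊆ s) := by
    intro s hs
    ext t
    simp only [hP3cdef, mem_filter, mem_powersetCard, subset_univ, true_and]
    tauto
  have hC3 : P3c.card = cyc3Count r := by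
    rw [cyc3Count]
  have hsum : ∑ s ∈ P4, ((powersetCard 3 s).filter (fun t => IsCyclicTriple r t)).card
      = (n - 3) * cyc3Count r := by
    calc ∑ s ∈ P4, ((powersetCard 3 s).filter (fun t => IsCyclicTriple r t)).card
        = ∑ s ∈ P4, ∑ t ∈ P3c, if t ⊆ s then 1 else 0 := by
          refine sum_congr rfl fun s hs => ?_
          rw [hstep1 s hs, card_filter]
      _ = ∑ t ∈ P3c, ∑ s ∈ P4, if t ⊆ s then 1 else 0 := sum_comm
      _ = ∑ t ∈ P3c, (P4.filter (fun s => t ⊆ s)).card := by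
          refine sum_congr rfl fun t ht => ?_
          rw [card_filter]
      _ = ∑ t ∈ P3c, (n - 3) := by
          refine sum_congr rfl fun t ht => ?_
          exact supersets_card (mem_powersetCard.1 (mem_filter.1 ht).1).2
      _ = (n - 3) * cyc3Count r := by
          rw [sum_const, smul_eq_mul, hC3, mul_comm]
  have hT4 : trans4Count r = ∑ s ∈ P4, (if IsTrans4 r s then 1 else 0) := by
    rw [trans4Count, ← card_filter]
  have hP4card : P4.card = n.choose 4 := by
    rw [hP4def, card_powersetCard, card_univ, Fintype.card_fin]
  have hpoint : ∀ s ∈ P4, 2 * (if IsTrans4 r s then 1 else 0)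
      + ((powersetCard 3 s).filter (fun t => IsCyclicTriple r t)).card ≤ 2 := by
    intro s hs
    have hs4 : s.card = 4 := (mem_powersetCard.1 hs).2
    by_cases h : IsTrans4 r s
    · rw [if_pos h, count_trans hT h]
    · rw [if_neg h, mul_zero, zero_add]
      exact count_le_two hT hs4
  have hmain : ∑ s ∈ P4, (2 * (if IsTrans4 r s then 1 else 0)
      + ((powersetCard 3 s).filter (fun t => IsCyclicTriple r t)).card) ≤ ∑ _s ∈ P4, 2 :=
    sum_le_sum hpoint
  rw [sum_add_distrib, ← mul_sum, sum_const, smul_eq_mul, hsum, hP4card] at hmain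
  have hnat : 2 * trans4Count r + (n - 3) * cyc3Count r ≤ 2 * n.choose 4 := by
    rw [hT4]; linarith [hmain]
  refine ⟨hnat, ?_⟩
  -- density form
  have h4pos : 0 < (n.choose 4 : ℝ) := by
    exact_mod_cast Nat.choose_pos hn
  have h3pos : 0 < (n.choose 3 : ℝ) := by
    exact_mod_cast Nat.choose_pos hn3
  have hch : (n.choose 4 : ℝ) * 4 = (n.choose 3 : ℝ) * ((n : ℝ) - 3) := by
    have h := Nat.choose_succ_right_eq n 3
    have h' : (n.choose 4 : ℝ) * 4 = (n.choose 3 : ℝ) * ((n - 3 : ℕ) : ℝ) := by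
      exact_mod_cast h
    rw [h', Nat.cast_sub hn3]
    norm_num
  have hcast : 2 * (trans4Count r : ℝ) + ((n : ℝ) - 3) * (cyc3Count r : ℝ)
      ≤ 2 * (n.choose 4 : ℝ) := by
    have := hnat
    have h' : ((2 * trans4Count r + (n - 3) * cyc3Count r : ℕ) : ℝ)
        ≤ ((2 * n.choose 4 : ℕ) : ℝ) := by exact_mod_cast this
    push_cast [Nat.cast_sub hn3] at h'
    linarith [h']
  rw [div_le_iff₀ h4pos]
  have hq : (cyc3Count r : ℝ) / (n.choose 3 : ℝ) * (n.choose 3 : ℝ) = (cyc3Count r : ℝ) :=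
    div_mul_cancel₀ _ (ne_of_gt h3pos)
  nlinarith [hcast, hch, hq, h3pos, h4pos,
    mul_nonneg (div_nonneg (Nat.cast_nonneg (cyc3Count r)) (le_of_lt h3pos)) (le_of_lt h4pos)]
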